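/- arXiv:1703.07433 — 10 statements merged into one kernel-verified Lean document; each statement's English description precedes it below -/
import Mathlib

section
/- Let F be a commutative monoid and let e ∈ F satisfy e*e = 1. Let g, h : F → SignType be monoid homomorphisms with g e = -1 and h e = -1. Then the following are equivalent: (1) h⁻¹({1}) ⊆ g⁻¹({1}); (2) h⁻¹({-1}) ⊆ g⁻¹({-1}); (3) g⁻¹({0,1}) ⊆ h⁻¹({0,1}); (4) Z(g) ⊆ Z(h) and for every a ∈ F with h a ≠ 0 one has g a = h a; (5) h = h² * g (pointwise); (6) h² = h * g (pointwise). -/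
/-- Zero-set of a `SignType`-valued function. -/
def Zset {F : Type*} (g : F → SignType) : Set F := {a | g a = 0}

theorem tfae_specialization {F : Type*} [CommMonoid F] (e : F) (he : e * e = 1)
    (g h : F →* SignType) (hge : g e = -1) (hhe : h e = -1) :
    List.TFAE [
      ⇑h ⁻¹' {1} ⊆ ⇑g ⁻¹' {1},
      ⇑h ⁻¹' {-1} ⊆ ⇑g ⁻¹' {-1},
      ⇑g ⁻¹' {0, 1} ⊆ ⇑h ⁻¹' {0, 1},
      Zset ⇑g ⊆ Zset ⇑h ∧ ∀ a : F, h a ≠ 0 → g a = h a,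
      ⇑h = ⇑h ^ 2 * ⇑g,
      ⇑h ^ 2 = ⇑h * ⇑g ] := by
  have k1 : ∀ x : SignType, x * -1 = 1 → x = -1 := by decide
  have k2 : ∀ x : SignType, x * -1 = -1 → x = 1 := by decide
  tfae_have 1 → 2 := by
    intro H a ha
    simp only [Set.mem_preimage, Set.mem_singleton_iff] at ha ⊢
    have h1 : h (a * e) = 1 := by rw [map_mul, hhe, ha]; decide
    have h2 : g (a * e) = 1 := H h1
    rw [map_mul, hge] at h2
    exact k1 _ h2
  tfae_have 2 → 1 := by
    intro H a ha
    simp only [Set.mem_preimage, Set.mem_singleton_iff] at ha ⊢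
    have h1 : h (a * e) = -1 := by rw [map_mul, hhe, ha]; decide
    have h2 : g (a * e) = -1 := H h1
    rw [map_mul, hge] at h2
    exact k2 _ h2
  tfae_have 1 → 4 := by
    intro H
    have H2 : ⇑h ⁻¹' {-1} ⊆ ⇑g ⁻¹' {-1} := tfae_1_to_2 H
    constructor
    · intro a ha
      simp only [Zset, Set.mem_setOf_eq] at ha ⊢
      cases hha : h a with
      | zero => rfl
      | pos =>
        have := H (show a ∈ ⇑h ⁻¹' {1} from hha)
        simp only [Set.mem_preimage, Set.mem_singleton_iff] at this
        rw [this] at ha; exact absurd ha (by decide)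
      | neg =>
        have := H2 (show a ∈ ⇑h ⁻¹' {-1} from hha)
        simp only [Set.mem_preimage, Set.mem_singleton_iff] at this
        rw [this] at ha; exact absurd ha (by decide)
    · intro a ha
      cases hha : h a with
      | zero => exact absurd hha ha
      | pos =>
        have := H (show a ∈ ⇑h ⁻¹' {1} from hha)
        simpa using this
      | neg =>
        have := tfae_1_to_2 H (show a ∈ ⇑h ⁻¹' {-1} from hha)
        simpa using this
  tfae_have 4 → 5 := by
    rintro ⟨Hz, Hs⟩
    funext a
    simp only [Pi.mul_apply, Pi.pow_apply]
    by_cases hha : h a = 0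
    · rw [hha]
      generalize g a = x
      revert x; decide
    · rw [Hs a hha]
      generalize h a = x
      revert x; decide
  tfae_have 5 → 6 := by
    intro H
    funext a
    have hp := congrFun H a
    simp only [Pi.mul_apply, Pi.pow_apply] at hp ⊢
    revert hp
    generalize h a = x
    generalize g a = y
    revert x y; decide
  tfae_have 6 → 3 := by
    intro H a ha
    have hp := congrFun H a
    simp only [Pi.mul_apply, Pi.pow_apply] at hp
    simp only [Set.mem_preimage, Set.mem_insert_iff, Set.mem_singleton_iff] at ha ⊢
    revert hp ha
    generalize h a = x
    generalize g a = y
    revert x y; decide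
  tfae_have 3 → 2 := by
    intro H a ha
    simp only [Set.mem_preimage, Set.mem_singleton_iff] at ha ⊢
    cases hg : g a with
    | neg => rfl
    | zero =>
      have := H (show a ∈ ⇑g ⁻¹' {0, 1} by simp [hg])
      simp only [Set.mem_preimage, Set.mem_insert_iff, Set.mem_singleton_iff, ha] at this
      rcases this with h' | h' <;> exact absurd h' (by decide)
    | pos =>
      have := H (show a ∈ ⇑g ⁻¹' {0, 1} by simp [hg])
      simp only [Set.mem_preimage, Set.mem_insert_iff, Set.mem_singleton_iff, ha] at this
      rcases this with h' | h' <;> exact absurd h' (by decide)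
  tfae_finish
end

section
/- Let F be a type and u, g, h : F → SignType. If u ⇝ g and u ⇝ h, then Z(g) ⊆ Z(h) if and only if g ⇝ h. -/
/-- `h` is a specialization of `g` (written `g ⇝ h`): `h = h² * g` pointwise. -/
def Spez {F : Type*} (g h : F → SignType) : Prop := h = h ^ 2 * g

theorem zeroset_subset_iff_spez_of_common_generization {F : Type*}
    (u g h : F → SignType) (hug : Spez u g) (huh : Spez u h) :
    Zset g ⊆ Zset h ↔ Spez g h := by
  constructor
  · intro hs
    funext a
    have h1 := congrFun hug a
    have h2 := congrFun huh a
    have hz : g a = 0 → h a = 0 := fun hg => hs hg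
    simp only [Pi.mul_apply, Pi.pow_apply] at h1 h2 ⊢
    revert h1 h2 hz
    generalize u a = x
    generalize g a = y
    generalize h a = z
    revert x y z
    decide
  · intro hsp a ha
    have := congrFun hsp a
    simp only [Pi.mul_apply, Pi.pow_apply] at this
    have hga : g a = 0 := ha
    show h a = 0
    rw [this, hga, mul_zero]
end

section
/- Let F be a type, r a natural number, and let g₁, …, g_r, f₁, …, f_r, h : F → SignType be such that ⋃_{i=1}^r Z(gᵢ) ⊆ Z(h), and for each i = 1, …, r, gᵢ ⇝ fᵢ and Z(gᵢ) ⊆ Z(fᵢ) ⊆ Z(h). Then h * g₁ * ⋯ * g_r = h * f₁ * ⋯ * f_r (pointwise products). -/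
theorem prod_eq_of_spez {F : Type*} (r : ℕ)
    (g f : Fin r → (F → SignType)) (h : F → SignType)
    (hU : (⋃ i, Zset (g i)) ⊆ Zset h)
    (hspez : ∀ i, Spez (g i) (f i))
    (hgf : ∀ i, Zset (g i) ⊆ Zset (f i))
    (hfh : ∀ i, Zset (f i) ⊆ Zset h) :
    h * ∏ i, g i = h * ∏ i, f i := by
  funext a
  simp only [Pi.mul_apply, Finset.prod_apply]
  by_cases hha : h a = 0
  · simp [hha]
  · have key : ∀ i, f i a = g i a := by
      intro i
      have hfa : f i a ≠ 0 := fun hf => hha (hfh i hf)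
      have := congrFun (hspez i) a
      simp only [Pi.mul_apply, Pi.pow_apply] at this
      have hsq : (f i a) ^ 2 = 1 := by
        rcases hx : f i a with _ | _ | _
        · exact absurd hx hfa
        · decide
        · decide
      rw [this, hsq, one_mul]
    simp [key]
end

section
/- Let F be a type, X a fan-set on F, I ⊆ F, and g₁, g₂ ∈ X with Z(g₁) ⊆ I and Z(g₂) ⊆ I. Then the map h ↦ h * g₁ * g₂ sends the level L_I = {h ∈ X | Z(h) = I} into itself and is an involutive bijection of L_I onto itself. -/
/-- A fan-set: a set of `SignType`-valued functions closed under products of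
any three of its elements. -/
def IsFanSet {F : Type*} (X : Set (F → SignType)) : Prop :=
  ∀ a ∈ X, ∀ b ∈ X, ∀ c ∈ X, a * b * c ∈ X

theorem involution_of_level {F : Type*} (X : Set (F → SignType)) (hX : IsFanSet X)
    (I : Set F) (g₁ g₂ : F → SignType) (hg₁ : g₁ ∈ X) (hg₂ : g₂ ∈ X)
    (hZ₁ : Zset g₁ ⊆ I) (hZ₂ : Zset g₂ ⊆ I) :
    (∀ h ∈ {h | h ∈ X ∧ Zset h = I}, h * g₁ * g₂ ∈ {h | h ∈ X ∧ Zset h = I}) ∧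
    (∀ h ∈ {h | h ∈ X ∧ Zset h = I}, h * g₁ * g₂ * g₁ * g₂ = h) ∧
    Set.BijOn (fun h => h * g₁ * g₂)
      {h | h ∈ X ∧ Zset h = I} {h | h ∈ X ∧ Zset h = I} := by
  have key : ∀ h ∈ {h | h ∈ X ∧ Zset h = I}, h * g₁ * g₂ ∈ {h | h ∈ X ∧ Zset h = I} := by
    rintro h ⟨hhX, hhZ⟩
    refine ⟨hX h hhX g₁ hg₁ g₂ hg₂, ?_⟩
    ext a
    simp only [Zset, Set.mem_setOf_eq, Pi.mul_apply, mul_eq_zero]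
    constructor
    · rintro ((h0 | h0) | h0)
      · rw [← hhZ]; exact h0
      · exact hZ₁ h0
      · exact hZ₂ h0
    · intro ha
      left; left
      rw [← hhZ] at ha; exact ha
  have inv : ∀ h ∈ {h | h ∈ X ∧ Zset h = I}, h * g₁ * g₂ * g₁ * g₂ = h := by
    rintro h ⟨hhX, hhZ⟩
    funext a
    simp only [Pi.mul_apply]
    by_cases h0 : h a = 0
    · simp [h0]
    · have ha : a ∉ I := by rw [← hhZ] at *; exact h0
      have h1 : g₁ a ≠ 0 := fun e => ha (hZ₁ e)
      have h2 : g₂ a ≠ 0 := fun e => ha (hZ₂ e)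
      revert h1 h2
      rcases h a <;> rcases g₁ a <;> rcases g₂ a <;> decide
  refine ⟨key, inv, key, ?_, ?_⟩
  · intro h₁ h1m h₂ h2m heq
    have := congrArg (fun f => f * g₁ * g₂) heq
    simp only at this
    rwa [inv h₁ h1m, inv h₂ h2m] at this
  · intro h hm
    exact ⟨h * g₁ * g₂, key h hm, inv h hm⟩
end

section
/- Let F be a type, X a fan-set on F, and J ⊆ I subsets of F. Then S^I_J = {h ∈ X | Z(h) = I and ∃ u ∈ X, u ⇝ h ∧ Z(u) = J} is closed under pointwise products of any three of its elements (so that it is again a fan of its level). -/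
/-- `SLev X J I`: elements of `X` of level `I` having a generization of level `J`. -/
def SLev {F : Type*} (X : Set (F → SignType)) (J I : Set F) : Set (F → SignType) :=
  {h | h ∈ X ∧ Zset h = I ∧ ∃ u ∈ X, Spez u h ∧ Zset u = J}


private lemma signType_key : ∀ a b c u v w : SignType,
    a = a ^ 2 * u → b = b ^ 2 * v → c = c ^ 2 * w →
    a * b * c = (a * b * c) ^ 2 * (u * v * w) := by decide

theorem SSet_closed_three_products {F : Type*} (X : Set (F → SignType))
    (hX : IsFanSet X) (J I : Set F) (hJI : J ⊆ I) :
    ∀ a ∈ SLev X J I, ∀ b ∈ SLev X J I, ∀ c ∈ SLev X J I,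
      a * b * c ∈ SLev X J I := by
  rintro a ⟨haX, haZ, ua, huaX, huaS, huaZ⟩
  rintro b ⟨hbX, hbZ, ub, hubX, hubS, hubZ⟩
  rintro c ⟨hcX, hcZ, uc, hucX, hucS, hucZ⟩
  refine ⟨hX a haX b hbX c hcX, ?_, ua * ub * uc, hX ua huaX ub hubX uc hucX, ?_, ?_⟩
  · ext x
    have ha : a x = 0 ↔ x ∈ I := by rw [← haZ]; rfl
    have hb : b x = 0 ↔ x ∈ I := by rw [← hbZ]; rfl
    have hc : c x = 0 ↔ x ∈ I := by rw [← hcZ]; rfl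
    simp only [Zset, Set.mem_setOf_eq, Pi.mul_apply, mul_eq_zero, ha, hb, hc, or_self]
  · funext x
    have ha := congrFun huaS x
    have hb := congrFun hubS x
    have hc := congrFun hucS x
    simp only [Pi.mul_apply, Pi.pow_apply] at ha hb hc ⊢
    exact signType_key _ _ _ _ _ _ ha hb hc
  · ext x
    have ha : ua x = 0 ↔ x ∈ J := by rw [← huaZ]; rfl
    have hb : ub x = 0 ↔ x ∈ J := by rw [← hubZ]; rfl
    have hc : uc x = 0 ↔ x ∈ J := by rw [← hucZ]; rfl
    simp only [Zset, Set.mem_setOf_eq, Pi.mul_apply, mul_eq_zero, ha, hb, hc, or_self]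
end

section
/- Let F be a type, X a fan-set on F, and J ⊆ J₁ ⊆ J₂ ⊆ I subsets of F. For h ∈ X set B(h) := {g ∈ S^{J₂}_{J₁} | g ⇝ h}. Then for any h₁, h₂ ∈ S^I_J there is a bijection between B(h₁) and B(h₂); explicitly, if u₁, u₂ ∈ X satisfy uᵢ ⇝ hᵢ and Z(uᵢ) = J (i = 1,2), then the map g ↦ g * u₁ * u₂ is a bijection of B(h₁) onto B(h₂). -/
private lemma st1 : ∀ s t a b : SignType, s = s ^ 2 * t →
    s * a * b = (s * a * b) ^ 2 * (t * a * b) := by decide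

private lemma st2 : ∀ h1 h2 g u1 u2 : SignType, (h1 = 0 ↔ h2 = 0) →
    h1 = h1 ^ 2 * g → h1 = h1 ^ 2 * u1 → h2 = h2 ^ 2 * u2 →
    h2 = h2 ^ 2 * (g * u1 * u2) := by decide

private lemma st3 : ∀ s a b : SignType, s = 0 ∨ (a ≠ 0 ∧ b ≠ 0) →
    s * a * b * b * a = s := by decide

lemma mapsTo_aux {F : Type*} (X : Set (F → SignType)) (hX : IsFanSet X)
    (J J₁ J₂ I : Set F) (hJ : J ⊆ J₁) (hJ₁ : J₁ ⊆ J₂) (hJ₂ : J₂ ⊆ I)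
    (h₁ h₂ u₁ u₂ : F → SignType)
    (hZh₁ : Zset h₁ = I) (hZh₂ : Zset h₂ = I)
    (hu₁X : u₁ ∈ X) (hu₂X : u₂ ∈ X)
    (hs₁ : Spez u₁ h₁) (hs₂ : Spez u₂ h₂)
    (hZu₁ : Zset u₁ = J) (hZu₂ : Zset u₂ = J) :
    Set.MapsTo (fun g => g * u₁ * u₂)
      {g | g ∈ SLev X J₁ J₂ ∧ Spez g h₁}
      {g | g ∈ SLev X J₁ J₂ ∧ Spez g h₂} := by
  rintro g ⟨⟨hgX, hZg, v, hvX, hsv, hZv⟩, hgh⟩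
  simp only [Set.mem_setOf_eq]
  refine ⟨⟨hX _ hgX _ hu₁X _ hu₂X, ?_, ⟨v * u₁ * u₂, hX _ hvX _ hu₁X _ hu₂X, ?_, ?_⟩⟩, ?_⟩
  · ext a
    have e1 := Set.ext_iff.mp hZg a
    have e2 := Set.ext_iff.mp hZu₁ a
    have e3 := Set.ext_iff.mp hZu₂ a
    simp only [Zset, Set.mem_setOf_eq] at e1 e2 e3
    have hJa : a ∈ J → a ∈ J₂ := fun h => hJ₁ (hJ h)
    simp only [Zset, Set.mem_setOf_eq, Pi.mul_apply, mul_eq_zero]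
    tauto
  · funext a
    exact st1 (g a) (v a) (u₁ a) (u₂ a) (congrFun hsv a)
  · ext a
    have e1 := Set.ext_iff.mp hZv a
    have e2 := Set.ext_iff.mp hZu₁ a
    have e3 := Set.ext_iff.mp hZu₂ a
    simp only [Zset, Set.mem_setOf_eq] at e1 e2 e3
    have hJa : a ∈ J → a ∈ J₁ := fun h => hJ h
    simp only [Zset, Set.mem_setOf_eq, Pi.mul_apply, mul_eq_zero]
    tauto
  · funext a
    have hiff : h₁ a = 0 ↔ h₂ a = 0 :=
      (Set.ext_iff.mp hZh₁ a).trans (Set.ext_iff.mp hZh₂ a).symm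
    exact st2 (h₁ a) (h₂ a) (g a) (u₁ a) (u₂ a) hiff
      (congrFun hgh a) (congrFun hs₁ a) (congrFun hs₂ a)

theorem bijOn_B_sets {F : Type*} (X : Set (F → SignType)) (hX : IsFanSet X)
    (J J₁ J₂ I : Set F) (hJ : J ⊆ J₁) (hJ₁ : J₁ ⊆ J₂) (hJ₂ : J₂ ⊆ I)
    (h₁ h₂ : F → SignType) (hh₁ : h₁ ∈ SLev X J I) (hh₂ : h₂ ∈ SLev X J I)
    (u₁ u₂ : F → SignType) (hu₁X : u₁ ∈ X) (hu₂X : u₂ ∈ X)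
    (hs₁ : Spez u₁ h₁) (hs₂ : Spez u₂ h₂)
    (hZu₁ : Zset u₁ = J) (hZu₂ : Zset u₂ = J) :
    Set.BijOn (fun g => g * u₁ * u₂)
      {g | g ∈ SLev X J₁ J₂ ∧ Spez g h₁}
      {g | g ∈ SLev X J₁ J₂ ∧ Spez g h₂} := by
  obtain ⟨hh₁X, hZh₁, -⟩ := hh₁
  obtain ⟨hh₂X, hZh₂, -⟩ := hh₂
  have m12 := mapsTo_aux X hX J J₁ J₂ I hJ hJ₁ hJ₂ h₁ h₂ u₁ u₂ hZh₁ hZh₂ hu₁X hu₂X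
    hs₁ hs₂ hZu₁ hZu₂
  have m21 := mapsTo_aux X hX J J₁ J₂ I hJ hJ₁ hJ₂ h₂ h₁ u₂ u₁ hZh₂ hZh₁ hu₂X hu₁X
    hs₂ hs₁ hZu₂ hZu₁
  refine Set.InvOn.bijOn (f' := fun g => g * u₂ * u₁) ⟨?_, ?_⟩ m12 m21
  · rintro g ⟨⟨hgX, hZg, -⟩, -⟩
    show g * u₁ * u₂ * u₂ * u₁ = g
    funext a
    have e1 := Set.ext_iff.mp hZg a
    have e2 := Set.ext_iff.mp hZu₁ a
    have e3 := Set.ext_iff.mp hZu₂ a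
    simp only [Zset, Set.mem_setOf_eq] at e1 e2 e3
    refine st3 (g a) (u₁ a) (u₂ a) ?_
    by_cases hga : g a = 0
    · exact Or.inl hga
    · have haJ : a ∉ J := fun h => hga (e1.mpr (hJ₁ (hJ h)))
      exact Or.inr ⟨fun h => haJ (e2.mp h), fun h => haJ (e3.mp h)⟩
  · rintro g ⟨⟨hgX, hZg, -⟩, -⟩
    show g * u₂ * u₁ * u₁ * u₂ = g
    funext a
    have e1 := Set.ext_iff.mp hZg a
    have e2 := Set.ext_iff.mp hZu₁ a
    have e3 := Set.ext_iff.mp hZu₂ a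
    simp only [Zset, Set.mem_setOf_eq] at e1 e2 e3
    refine st3 (g a) (u₂ a) (u₁ a) ?_
    by_cases hga : g a = 0
    · exact Or.inl hga
    · have haJ : a ∉ J := fun h => hga (e1.mpr (hJ₁ (hJ h)))
      exact Or.inr ⟨fun h => haJ (e3.mp h), fun h => haJ (e2.mp h)⟩
end

section
/- Let F be a type, X a fan-set on F, and J ⊆ J₁ ⊆ J₂ ⊆ I subsets of F. For h ∈ X set A(h) := {g ∈ C^{J₂}_{J₁} | g ⇝ h}. Then for any h₁, h₂ ∈ C^I_J there is a bijection between A(h₁) and A(h₂); explicitly, if u₁, u₂ ∈ X satisfy uᵢ ⇝ hᵢ and Z(uᵢ) = J (i = 1,2), then the map g ↦ g * u₁ * u₂ is a bijection of A(h₁) onto A(h₂). -/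
/-- `CLev X J I`: elements of `X` of level `I` having a generization of level `J`
but none of any strictly lower level. -/
def CLev {F : Type*} (X : Set (F → SignType)) (J I : Set F) : Set (F → SignType) :=
  {h | h ∈ SLev X J I ∧ ∀ g ∈ X, Spez g h → J ⊆ Zset g}

lemma spez_iff {F : Type*} (g h : F → SignType) :
    Spez g h ↔ ∀ a, h a ≠ 0 → g a = h a := by
  unfold Spez
  rw [funext_iff]
  apply forall_congr'
  intro a
  simp only [Pi.mul_apply, Pi.pow_apply]
  have : ∀ x y : SignType, (y = y ^ 2 * x ↔ (y ≠ 0 → x = y)) := by decide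
  exact this (g a) (h a)

lemma spez_trans {F : Type*} {a b c : F → SignType} (h1 : Spez a b) (h2 : Spez b c) :
    Spez a c := by
  rw [spez_iff] at *
  intro x hx
  rw [h1 x, h2 x hx]
  rw [h2 x hx]
  exact hx

lemma zset_mul {F : Type*} (g h : F → SignType) : Zset (g * h) = Zset g ∪ Zset h := by
  ext a
  have : ∀ x y : SignType, (x * y = 0 ↔ x = 0 ∨ y = 0) := by decide
  simp [Zset, this]

lemma nmem_zset {F : Type*} {g : F → SignType} {a : F} : a ∉ Zset g ↔ g a ≠ 0 := Iff.rfl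

/-- The key one-directional lemma: the product map sends `A(h₁)` into `A(h₂)`. -/
lemma mapsTo_A_sets {F : Type*} (X : Set (F → SignType)) (hX : IsFanSet X)
    (J J₁ J₂ I : Set F) (hJ : J ⊆ J₁) (hJ₁ : J₁ ⊆ J₂) (hJ₂ : J₂ ⊆ I)
    (h₁ h₂ : F → SignType) (hh₁ : h₁ ∈ CLev X J I) (hh₂ : h₂ ∈ CLev X J I)
    (u₁ u₂ : F → SignType) (hu₁X : u₁ ∈ X) (hu₂X : u₂ ∈ X)
    (hs₁ : Spez u₁ h₁) (hs₂ : Spez u₂ h₂)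
    (hZu₁ : Zset u₁ = J) (hZu₂ : Zset u₂ = J) :
    Set.MapsTo (fun g => g * u₁ * u₂)
      {g | g ∈ CLev X J₁ J₂ ∧ Spez g h₁}
      {g | g ∈ CLev X J₁ J₂ ∧ Spez g h₂} := by
  obtain ⟨⟨hh₁X, hZh₁, -⟩, -⟩ := hh₁
  obtain ⟨⟨hh₂X, hZh₂, -⟩, hC₂⟩ := hh₂
  rintro g ⟨⟨⟨hgX, hZg, v, hvX, hvg, hZv⟩, hgC⟩, hgs⟩
  have hJJ₂ : J ⊆ J₂ := hJ.trans hJ₁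
  -- pointwise helpers
  rw [spez_iff] at hs₁ hs₂ hgs hvg
  have hu₁ : ∀ a, a ∉ J → u₁ a ≠ 0 := fun a ha => by
    rw [← hZu₁] at ha; exact ha
  have hu₂ : ∀ a, a ∉ J → u₂ a ≠ 0 := fun a ha => by
    rw [← hZu₂] at ha; exact ha
  -- Spez (g * u₁ * u₂) h₂
  have hspez : Spez (g * u₁ * u₂) h₂ := by
    rw [spez_iff]
    intro a ha
    have haI : a ∉ I := by rw [← hZh₂]; exact ha
    have hh₁a : h₁ a ≠ 0 := by rw [← hZh₁] at haI; exact haI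
    simp only [Pi.mul_apply]
    rw [hgs a hh₁a, hs₁ a hh₁a, hs₂ a ha]
    have : ∀ x y : SignType, x ≠ 0 → x * x * y = y := by decide
    exact this _ _ hh₁a
  have hZset : Zset (g * u₁ * u₂) = J₂ := by
    rw [zset_mul, zset_mul, hZg, hZu₁, hZu₂, Set.union_assoc, Set.union_self,
      Set.union_eq_self_of_subset_right hJJ₂]
  refine ⟨⟨⟨hX g hgX u₁ hu₁X u₂ hu₂X, hZset, v * u₁ * u₂, hX v hvX u₁ hu₁X u₂ hu₂X,
    ?_, ?_⟩, ?_⟩, hspez⟩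
  · -- Spez (v * u₁ * u₂) (g * u₁ * u₂)
    rw [spez_iff]
    intro a ha
    have haJ₂ : a ∉ J₂ := by rw [← hZset]; exact ha
    have hga : g a ≠ 0 := by rw [← hZg] at haJ₂; exact haJ₂
    simp only [Pi.mul_apply]
    rw [hvg a hga]
  · rw [zset_mul, zset_mul, hZv, hZu₁, hZu₂, Set.union_assoc, Set.union_self,
      Set.union_eq_self_of_subset_right (hJ : J ⊆ J₁)]
  · -- the CLev minimality condition for g * u₁ * u₂
    intro w hwX hw
    have hJw : J ⊆ Zset w := hC₂ w hwX (spez_trans hw hspez)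
    have hw' := (spez_iff _ _).mp hw
    have hwg : Spez (w * u₂ * u₁) g := by
      rw [spez_iff]
      intro a ha
      have haJ₂ : a ∉ J₂ := by rw [← hZg]; exact ha
      have haJ : a ∉ J := fun h => haJ₂ (hJJ₂ h)
      have hprod : (g * u₁ * u₂) a ≠ 0 := by
        simp only [Pi.mul_apply]
        have : ∀ x y z : SignType, x ≠ 0 → y ≠ 0 → z ≠ 0 → x * y * z ≠ 0 := by decide
        exact this _ _ _ ha (hu₁ a haJ) (hu₂ a haJ)
      have := hw' a hprod
      simp only [Pi.mul_apply] at this ⊢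
      rw [this]
      have : ∀ x y z : SignType, y ≠ 0 → z ≠ 0 → x * y * z * z * y = x := by decide
      exact this _ _ _ (hu₁ a haJ) (hu₂ a haJ)
    have hJ₁w : J₁ ⊆ Zset (w * u₂ * u₁) :=
      hgC (w * u₂ * u₁) (hX w hwX u₂ hu₂X u₁ hu₁X) hwg
    intro a ha
    rcases (by rw [zset_mul, zset_mul, hZu₁, hZu₂] at hJ₁w; exact hJ₁w ha :
        a ∈ Zset w ∪ J ∪ J) with (h | h) | h
    · exact h
    · exact hJw h
    · exact hJw h

theorem bijOn_A_sets {F : Type*} (X : Set (F → SignType)) (hX : IsFanSet X)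
    (J J₁ J₂ I : Set F) (hJ : J ⊆ J₁) (hJ₁ : J₁ ⊆ J₂) (hJ₂ : J₂ ⊆ I)
    (h₁ h₂ : F → SignType) (hh₁ : h₁ ∈ CLev X J I) (hh₂ : h₂ ∈ CLev X J I)
    (u₁ u₂ : F → SignType) (hu₁X : u₁ ∈ X) (hu₂X : u₂ ∈ X)
    (hs₁ : Spez u₁ h₁) (hs₂ : Spez u₂ h₂)
    (hZu₁ : Zset u₁ = J) (hZu₂ : Zset u₂ = J) :
    Set.BijOn (fun g => g * u₁ * u₂)
      {g | g ∈ CLev X J₁ J₂ ∧ Spez g h₁}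
      {g | g ∈ CLev X J₁ J₂ ∧ Spez g h₂} := by
  have hmt₁ := mapsTo_A_sets X hX J J₁ J₂ I hJ hJ₁ hJ₂ h₁ h₂ hh₁ hh₂ u₁ u₂ hu₁X hu₂X
    hs₁ hs₂ hZu₁ hZu₂
  have hmt₂ := mapsTo_A_sets X hX J J₁ J₂ I hJ hJ₁ hJ₂ h₂ h₁ hh₂ hh₁ u₂ u₁ hu₂X hu₁X
    hs₂ hs₁ hZu₂ hZu₁
  have hJJ₂ : J ⊆ J₂ := hJ.trans hJ₁
  have key : ∀ g : F → SignType, Zset g = J₂ → g * u₁ * u₂ * u₂ * u₁ = g := by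
    intro g hZg
    funext a
    by_cases haJ : a ∈ J
    · have hg : g a = 0 := by have h := hJJ₂ haJ; rw [← hZg] at h; exact h
      have hu : u₁ a = 0 := by rw [← hZu₁] at haJ; simpa [Zset] using haJ
      simp [hg, hu]
    · have h1 : u₁ a ≠ 0 := by rw [← hZu₁] at haJ; exact haJ
      have h2 : u₂ a ≠ 0 := by rw [← hZu₂] at haJ; exact haJ
      simp only [Pi.mul_apply]
      have : ∀ x y z : SignType, y ≠ 0 → z ≠ 0 → x * y * z * z * y = x := by decide
      exact this _ _ _ h1 h2
  have key' : ∀ g : F → SignType, Zset g = J₂ → g * u₂ * u₁ * u₁ * u₂ = g := by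
    intro g hZg
    funext a
    by_cases haJ : a ∈ J
    · have hg : g a = 0 := by have h := hJJ₂ haJ; rw [← hZg] at h; exact h
      have hu : u₂ a = 0 := by rw [← hZu₂] at haJ; simpa [Zset] using haJ
      simp [hg, hu]
    · have h1 : u₁ a ≠ 0 := by rw [← hZu₁] at haJ; exact haJ
      have h2 : u₂ a ≠ 0 := by rw [← hZu₂] at haJ; exact haJ
      simp only [Pi.mul_apply]
      have : ∀ x y z : SignType, y ≠ 0 → z ≠ 0 → x * y * z * z * y = x := by decide
      exact this _ _ _ h2 h1
  refine Set.InvOn.bijOn ⟨?_, ?_⟩ hmt₁ hmt₂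
  · rintro g ⟨⟨⟨-, hZg, -⟩, -⟩, -⟩
    simpa using key g hZg
  · rintro g ⟨⟨⟨-, hZg, -⟩, -⟩, -⟩
    simpa using key' g hZg
end

section
/- Let F be a type, X a fan-set on F, J ⊆ I subsets of F, and g₁, g₂ ∈ X with Z(g₁) ⊆ J and Z(g₂) ⊆ J. Then the map h ↦ h * g₁ * g₂ is an involutive bijection of the set S^I_J = {h ∈ X | Z(h) = I and ∃ u ∈ X, u ⇝ h ∧ Z(u) = J} onto itself. -/
private lemma signKey1 : ∀ x y z : SignType,
    (y = 0 → x = 0) → (z = 0 → x = 0) → x * y * z * y * z = x := by decide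

private lemma signKey2 : ∀ x y z : SignType,
    (y = 0 → x = 0) → (z = 0 → x = 0) → (x * y * z = 0 ↔ x = 0) := by decide

private lemma signKey3 : ∀ x y z u : SignType,
    x = x * x * u → x * y * z = (x * y * z) * (x * y * z) * (u * y * z) := by decide

theorem involution_permutes_SSet {F : Type*} (X : Set (F → SignType))
    (hX : IsFanSet X) (J I : Set F) (hJI : J ⊆ I)
    (g₁ g₂ : F → SignType) (hg₁ : g₁ ∈ X) (hg₂ : g₂ ∈ X)
    (hZ₁ : Zset g₁ ⊆ J) (hZ₂ : Zset g₂ ⊆ J) :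
    Set.BijOn (fun h => h * g₁ * g₂) (SLev X J I) (SLev X J I) ∧
    (∀ h ∈ SLev X J I, h * g₁ * g₂ * g₁ * g₂ = h) := by
  -- pointwise vanishing facts
  have hz : ∀ (h : F → SignType) (K : Set F), Zset h = K → J ⊆ K →
      ∀ a, (g₁ a = 0 → h a = 0) ∧ (g₂ a = 0 → h a = 0) := by
    intro h K hh hJK a
    constructor
    · intro h1
      have : a ∈ K := hJK (hZ₁ h1)
      rw [← hh] at this; exact this
    · intro h1
      have : a ∈ K := hJK (hZ₂ h1)
      rw [← hh] at this; exact this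
  have hinv : ∀ h ∈ SLev X J I, h * g₁ * g₂ * g₁ * g₂ = h := by
    rintro h ⟨_, hhZ, _⟩
    funext a
    exact signKey1 (h a) (g₁ a) (g₂ a) (hz h I hhZ hJI a).1 (hz h I hhZ hJI a).2
  have hmaps : Set.MapsTo (fun h => h * g₁ * g₂) (SLev X J I) (SLev X J I) := by
    rintro h ⟨hhX, hhZ, u, huX, hsp, huZ⟩
    refine ⟨hX h hhX g₁ hg₁ g₂ hg₂, ?_, u * g₁ * g₂, hX u huX g₁ hg₁ g₂ hg₂, ?_, ?_⟩
    · ext a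
      simp only [Zset, Set.mem_setOf_eq, Pi.mul_apply]
      rw [signKey2 (h a) (g₁ a) (g₂ a) (hz h I hhZ hJI a).1 (hz h I hhZ hJI a).2]
      rw [← hhZ]; rfl
    · funext a
      have := congrFun hsp a
      simp only [Pi.mul_apply, Pi.pow_apply, pow_two] at this ⊢
      exact signKey3 (h a) (g₁ a) (g₂ a) (u a) this
    · ext a
      simp only [Zset, Set.mem_setOf_eq, Pi.mul_apply]
      rw [signKey2 (u a) (g₁ a) (g₂ a) (hz u J huZ (fun _ h => h) a).1
        (hz u J huZ (fun _ h => h) a).2]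
      rw [← huZ]; rfl
  refine ⟨Set.InvOn.bijOn ⟨?_, ?_⟩ hmaps hmaps, hinv⟩ <;>
    · intro h hh
      exact hinv h hh
end

section
/- Let F be a type, X a fan-set on F, and h ∈ X. Then the set of generizations P_h = {g ∈ X | g ⇝ h} is closed under pointwise products of any three of its elements (so that the set of predecessors of any point of an abstract-real-spectrum fan under specialization is again a fan). -/
theorem generizations_closed_three_products {F : Type*}
    (X : Set (F → SignType)) (hX : IsFanSet X) (h : F → SignType) (hh : h ∈ X) :
    ∀ a ∈ {g | g ∈ X ∧ Spez g h}, ∀ b ∈ {g | g ∈ X ∧ Spez g h},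
      ∀ c ∈ {g | g ∈ X ∧ Spez g h}, a * b * c ∈ {g | g ∈ X ∧ Spez g h} := by
  rintro a ⟨haX, ha⟩ b ⟨hbX, hb⟩ c ⟨hcX, hc⟩
  refine ⟨hX a haX b hbX c hcX, funext fun x => ?_⟩
  have ha' := congrFun ha x
  have hb' := congrFun hb x
  have hc' := congrFun hc x
  simp only [Pi.mul_apply, Pi.pow_apply] at *
  revert ha' hb' hc'
  cases h x <;> cases a x <;> cases b x <;> cases c x <;> decide
end

section
/- Let F₁, F₂ be types and let X₁ be a fan-set on F₁ such that: (total comparability) for all g, h ∈ X₁, Z(g) ⊆ Z(h) or Z(h) ⊆ Z(g); and (successor existence) for all g, h ∈ X₁ with Z(g) ⊆ Z(h) there exists f ∈ X₁ with g ⇝ f and Z(f) = Z(h). Let X₂ be a set of functions F₂ → SignType and F : X₁ → X₂ a map. Then the following are equivalent: (i) F preserves 3-products: for all h₁, h₂, h₃ ∈ X₁ with h₁*h₂*h₃ ∈ X₁ one has F(h₁*h₂*h₃) = F(h₁)*F(h₂)*F(h₃); (ii) F preserves 3-products of elements of the same level (for all h₁, h₂, h₃ ∈ X₁ with Z(h₁)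 = Z(h₂) = Z(h₃) and h₁*h₂*h₃ ∈ X₁, F(h₁*h₂*h₃) = F(h₁)*F(h₂)*F(h₃)) and F is monotone for specialization (for g, h ∈ X₁, g ⇝ h implies F(g) ⇝ F(h)). -/
private lemma signA : ∀ s₁ s₂ t₁ t₂ t₃ : SignType,
    s₁ = s₁ ^ 2 * t₁ → s₂ = s₂ ^ 2 * t₂ → (s₁ = 0 ↔ t₃ = 0) → (s₂ = 0 ↔ t₃ = 0) →
    s₁ * s₂ * t₃ = t₁ * t₂ * t₃ := by decide

private lemma signB : ∀ s t : SignType, (s = 0 ↔ t = 0) → s * s * t = t := by decide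

private lemma signC : ∀ x y c a b : SignType,
    x = x ^ 2 * a → y = y ^ 2 * b → c = x * x * c → c = y * y * c →
    x * y * c = a * b * c := by decide

private lemma zset_iff {F : Type*} {f g : F → SignType} (h : Zset f = Zset g) :
    ∀ a, f a = 0 ↔ g a = 0 := by
  intro a
  have := Set.ext_iff.mp h a
  simpa [Zset] using this

private lemma key {F₁ F₂ : Type*}
    (X₁ : Set (F₁ → SignType))
    (hsucc : ∀ g ∈ X₁, ∀ h ∈ X₁, Zset g ⊆ Zset h →
      ∃ f ∈ X₁, Spez g f ∧ Zset f = Zset h)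
    (Φ : (F₁ → SignType) → (F₂ → SignType))
    (hA : ∀ h₁ ∈ X₁, ∀ h₂ ∈ X₁, ∀ h₃ ∈ X₁,
        Zset h₁ = Zset h₂ → Zset h₂ = Zset h₃ → h₁ * h₂ * h₃ ∈ X₁ →
        Φ (h₁ * h₂ * h₃) = Φ h₁ * Φ h₂ * Φ h₃)
    (hB : ∀ g ∈ X₁, ∀ h ∈ X₁, Spez g h → Spez (Φ g) (Φ h))
    {g₁ g₂ g₃ : F₁ → SignType}
    (m₁ : g₁ ∈ X₁) (m₂ : g₂ ∈ X₁) (m₃ : g₃ ∈ X₁)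
    (o12 : Zset g₁ ⊆ Zset g₂) (o23 : Zset g₂ ⊆ Zset g₃)
    (hp : g₁ * g₂ * g₃ ∈ X₁) :
    Φ (g₁ * g₂ * g₃) = Φ g₁ * Φ g₂ * Φ g₃ := by
  obtain ⟨f₁, f₁m, sp₁, zf₁⟩ := hsucc g₁ m₁ g₃ m₃ (o12.trans o23)
  obtain ⟨f₂, f₂m, sp₂, zf₂⟩ := hsucc g₂ m₂ g₃ m₃ o23
  have z₁ := zset_iff zf₁
  have z₂ := zset_iff zf₂
  have sp₁' : ∀ a, f₁ a = (f₁ a) ^ 2 * g₁ a := fun a => by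
    have := congrFun sp₁ a; simpa using this
  have sp₂' : ∀ a, f₂ a = (f₂ a) ^ 2 * g₂ a := fun a => by
    have := congrFun sp₂ a; simpa using this
  have e1 : f₁ * f₂ * g₃ = g₁ * g₂ * g₃ :=
    funext fun a => signA (f₁ a) (f₂ a) (g₁ a) (g₂ a) (g₃ a)
      (sp₁' a) (sp₂' a) (z₁ a) (z₂ a)
  have e2 : f₁ * f₁ * g₃ = g₃ := funext fun a => signB (f₁ a) (g₃ a) (z₁ a)
  have e3 : f₂ * f₂ * g₃ = g₃ := funext fun a => signB (f₂ a) (g₃ a) (z₂ a)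
  have q1 : Φ (f₁ * f₂ * g₃) = Φ f₁ * Φ f₂ * Φ g₃ :=
    hA f₁ f₁m f₂ f₂m g₃ m₃ (zf₁.trans zf₂.symm) zf₂ (by rw [e1]; exact hp)
  have q2 : Φ g₃ = Φ f₁ * Φ f₁ * Φ g₃ := by
    have := hA f₁ f₁m f₁ f₁m g₃ m₃ rfl zf₁ (by rw [e2]; exact m₃)
    rw [e2] at this; exact this
  have q3 : Φ g₃ = Φ f₂ * Φ f₂ * Φ g₃ := by
    have := hA f₂ f₂m f₂ f₂m g₃ m₃ rfl zf₂ (by rw [e3]; exact m₃)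
    rw [e3] at this; exact this
  have s1 : Φ f₁ = (Φ f₁) ^ 2 * Φ g₁ := hB g₁ m₁ f₁ f₁m sp₁
  have s2 : Φ f₂ = (Φ f₂) ^ 2 * Φ g₂ := hB g₂ m₂ f₂ f₂m sp₂
  calc Φ (g₁ * g₂ * g₃) = Φ (f₁ * f₂ * g₃) := by rw [e1]
    _ = Φ f₁ * Φ f₂ * Φ g₃ := q1
    _ = Φ g₁ * Φ g₂ * Φ g₃ := funext fun a => by
        refine signC (Φ f₁ a) (Φ f₂ a) (Φ g₃ a) (Φ g₁ a) (Φ g₂ a) ?_ ?_ ?_ ?_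
        · have := congrFun s1 a; simpa using this
        · have := congrFun s2 a; simpa using this
        · have := congrFun q2 a; simpa using this
        · have := congrFun q3 a; simpa using this

theorem preserves_three_products_iff {F₁ F₂ : Type*}
    (X₁ : Set (F₁ → SignType)) (hX : IsFanSet X₁)
    (htot : ∀ g ∈ X₁, ∀ h ∈ X₁, Zset g ⊆ Zset h ∨ Zset h ⊆ Zset g)
    (hsucc : ∀ g ∈ X₁, ∀ h ∈ X₁, Zset g ⊆ Zset h →
      ∃ f ∈ X₁, Spez g f ∧ Zset f = Zset h)
    (X₂ : Set (F₂ → SignType))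
    (Φ : (F₁ → SignType) → (F₂ → SignType))
    (hΦ : ∀ g ∈ X₁, Φ g ∈ X₂) :
    (∀ h₁ ∈ X₁, ∀ h₂ ∈ X₁, ∀ h₃ ∈ X₁, h₁ * h₂ * h₃ ∈ X₁ →
        Φ (h₁ * h₂ * h₃) = Φ h₁ * Φ h₂ * Φ h₃)
    ↔
    ((∀ h₁ ∈ X₁, ∀ h₂ ∈ X₁, ∀ h₃ ∈ X₁,
        Zset h₁ = Zset h₂ → Zset h₂ = Zset h₃ → h₁ * h₂ * h₃ ∈ X₁ →
        Φ (h₁ * h₂ * h₃) = Φ h₁ * Φ h₂ * Φ h₃) ∧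
      (∀ g ∈ X₁, ∀ h ∈ X₁, Spez g h → Spez (Φ g) (Φ h))) := by
  constructor
  · intro H
    refine ⟨fun h₁ m₁ h₂ m₂ h₃ m₃ _ _ hp => H h₁ m₁ h₂ m₂ h₃ m₃ hp, ?_⟩
    intro g gm h hm sp
    have e : h * h * g = h := by rw [← pow_two, ← sp]
    have hp : h * h * g ∈ X₁ := by rw [e]; exact hm
    have := H h hm h hm g gm hp
    unfold Spez
    rw [pow_two, ← this, e]
  · rintro ⟨hA, hB⟩
    intro h₁ m₁ h₂ m₂ h₃ m₃ hp
    rcases htot h₁ m₁ h₂ m₂ with h12 | h21 <;>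
      rcases htot h₁ m₁ h₃ m₃ with h13 | h31 <;>
      rcases htot h₂ m₂ h₃ m₃ with h23 | h32
    · exact key X₁ hsucc Φ hA hB m₁ m₂ m₃ h12 h23 hp
    · -- Z1⊆Z2, Z1⊆Z3, Z3⊆Z2 : order (1,3,2)
      have e : h₁ * h₃ * h₂ = h₁ * h₂ * h₃ := by ac_rfl
      have := key X₁ hsucc Φ hA hB m₁ m₃ m₂ h13 h32 (by rw [e]; exact hp)
      rw [e] at this; rw [this]; ac_rfl
    · -- Z1⊆Z2, Z3⊆Z1, Z2⊆Z3 : order (3,1,2)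
      have e : h₃ * h₁ * h₂ = h₁ * h₂ * h₃ := by ac_rfl
      have := key X₁ hsucc Φ hA hB m₃ m₁ m₂ h31 h12 (by rw [e]; exact hp)
      rw [e] at this; rw [this]; ac_rfl
    · -- Z3⊆Z1⊆Z2 : order (3,1,2)
      have e : h₃ * h₁ * h₂ = h₁ * h₂ * h₃ := by ac_rfl
      have := key X₁ hsucc Φ hA hB m₃ m₁ m₂ h31 h12 (by rw [e]; exact hp)
      rw [e] at this; rw [this]; ac_rfl
    · -- Z2⊆Z1, Z1⊆Z3 : order (2,1,3)
      have e : h₂ * h₁ * h₃ = h₁ * h₂ * h₃ := by ac_rfl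
      have := key X₁ hsucc Φ hA hB m₂ m₁ m₃ h21 h13 (by rw [e]; exact hp)
      rw [e] at this; rw [this]; ac_rfl
    · -- Z2⊆Z1, Z1⊆Z3, Z3⊆Z2 : order (2,1,3)
      have e : h₂ * h₁ * h₃ = h₁ * h₂ * h₃ := by ac_rfl
      have := key X₁ hsucc Φ hA hB m₂ m₁ m₃ h21 h13 (by rw [e]; exact hp)
      rw [e] at this; rw [this]; ac_rfl
    · -- Z2⊆Z1, Z3⊆Z1, Z2⊆Z3 : order (2,3,1)
      have e : h₂ * h₃ * h₁ = h₁ * h₂ * h₃ := by ac_rfl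
      have := key X₁ hsucc Φ hA hB m₂ m₃ m₁ h23 h31 (by rw [e]; exact hp)
      rw [e] at this; rw [this]; ac_rfl
    · -- Z3⊆Z2⊆Z1 : order (3,2,1)
      have e : h₃ * h₂ * h₁ = h₁ * h₂ * h₃ := by ac_rfl
      have := key X₁ hsucc Φ hA hB m₃ m₂ m₁ h32 h21 (by rw [e]; exact hp)
      rw [e] at this; rw [this]; ac_rfl
end
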